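/- For the learning rates α_t = (H+1)/(H+t) with H ≥ 1, define α_t^i = α_i ∏_{j=i+1}^t (1-α_j) for 1 ≤ i ≤ t. Then for every t ≥ 1, 1/√t ≤ ∑_{i=1}^t α_t^i/√i ≤ 2/√t. -/

import Mathlib

theorem stmt0 (H : ℕ) (hH : 1 ≤ H)
    (α : ℕ → ℝ) (hα : ∀ t : ℕ, α t = (H + 1) / (H + t))
    (w : ℕ → ℕ → ℝ)
    (hw : ∀ t i : ℕ, w t i = α i * ∏ j ∈ Finset.Icc (i + 1) t, (1 - α j)) :
    ∀ t : ℕ, 1 ≤ t →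
      1 / Real.sqrt t ≤ ∑ i ∈ Finset.Icc 1 t, w t i / Real.sqrt i ∧
      ∑ i ∈ Finset.Icc 1 t, w t i / Real.sqrt i ≤ 2 / Real.sqrt t := by
  have hHr : (1 : ℝ) ≤ (H : ℝ) := by exact_mod_cast hH
  have hαpos : ∀ i : ℕ, 0 < α i := by
    intro i; rw [hα]
    apply div_pos
    · linarith
    · have : (0:ℝ) ≤ (i:ℝ) := Nat.cast_nonneg i
      linarith
  have hαle1 : ∀ j : ℕ, 1 ≤ j → α j ≤ 1 := by
    intro j hj; rw [hα]
    rw [div_le_one (by have : (0:ℝ) ≤ (j:ℝ) := Nat.cast_nonneg j; linarith)]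
    have : (1:ℝ) ≤ (j:ℝ) := by exact_mod_cast hj
    linarith
  have hwnn : ∀ t i : ℕ, 1 ≤ i → 0 ≤ w t i := by
    intro t i hi
    rw [hw]
    apply mul_nonneg (hαpos i).le
    apply Finset.prod_nonneg
    intro j hj
    simp only [Finset.mem_Icc] at hj
    have := hαle1 j (by omega)
    linarith
  -- recurrence
  have hrec : ∀ (g : ℕ → ℝ) (t : ℕ), 1 ≤ t →
      ∑ i ∈ Finset.Icc 1 (t+1), w (t+1) i * g i
        = (1 - α (t+1)) * ∑ i ∈ Finset.Icc 1 t, w t i * g i + α (t+1) * g (t+1) := by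
    intro g t ht
    rw [Finset.sum_Icc_succ_top (by omega)]
    have h1 : w (t+1) (t+1) = α (t+1) := by
      rw [hw, Finset.Icc_eq_empty (by omega), Finset.prod_empty, mul_one]
    have h2 : ∀ i ∈ Finset.Icc 1 t, w (t+1) i * g i = (1 - α (t+1)) * (w t i * g i) := by
      intro i hi
      simp only [Finset.mem_Icc] at hi
      rw [hw, hw, Finset.prod_Icc_succ_top (by omega)]
      ring
    rw [Finset.sum_congr rfl h2, ← Finset.mul_sum, h1]
  have hα1 : α 1 = 1 := by
    rw [hα]
    push_cast
    rw [div_self (by linarith)]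
  have hw11 : w 1 1 = 1 := by
    rw [hw, Finset.Icc_eq_empty (by omega), Finset.prod_empty, mul_one, hα1]
  -- sum of weights is 1
  have hwsum : ∀ t : ℕ, 1 ≤ t → ∑ i ∈ Finset.Icc 1 t, w t i = 1 := by
    intro t ht
    induction t, ht using Nat.le_induction with
    | base => simp [hw11]
    | succ t ht ih =>
      have := hrec (fun _ => 1) t ht
      simp only [mul_one] at this
      rw [this, ih]; ring
  intro t ht
  constructor
  · -- lower bound
    have hle : ∑ i ∈ Finset.Icc 1 t, w t i / Real.sqrt t
        ≤ ∑ i ∈ Finset.Icc 1 t, w t i / Real.sqrt i := by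
      apply Finset.sum_le_sum
      intro i hi
      simp only [Finset.mem_Icc] at hi
      have h1 : (1:ℝ) ≤ (i:ℝ) := by exact_mod_cast hi.1
      have h2 : (i:ℝ) ≤ (t:ℝ) := by exact_mod_cast hi.2
      have h3 : (0:ℝ) < Real.sqrt i := Real.sqrt_pos.mpr (by linarith)
      gcongr
      · exact hwnn t i hi.1
    calc 1 / Real.sqrt t = ∑ i ∈ Finset.Icc 1 t, w t i / Real.sqrt t := by
          rw [← Finset.sum_div, hwsum t ht]
      _ ≤ _ := hle
  · -- upper bound, by induction
    induction t, ht using Nat.le_induction with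
    | base => simp [hw11]
    | succ t ht ih =>
      have hrec' := hrec (fun i => (Real.sqrt i)⁻¹) t ht
      simp only [← div_eq_mul_inv] at hrec'
      rw [hrec']
      have hcast : ((t+1 : ℕ) : ℝ) = (t:ℝ)+1 := by push_cast; ring
      rw [hcast]
      set s := Real.sqrt t with hsdef
      set u := Real.sqrt ((t:ℝ)+1) with hudef
      have hs2 : s^2 = t := Real.sq_sqrt (Nat.cast_nonneg t)
      have htr : (1:ℝ) ≤ (t:ℝ) := by exact_mod_cast ht
      have hu2 : u^2 = (t:ℝ)+1 := Real.sq_sqrt (by linarith)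
      have hs0 : 0 < s := Real.sqrt_pos.mpr (by linarith)
      have hu0 : 0 < u := Real.sqrt_pos.mpr (by linarith)
      have hαt : α (t+1) = ((H:ℝ)+1)/((H:ℝ)+t+1) := by rw [hα]; push_cast; ring_nf
      have hαt1 : α (t+1) ≤ 1 := hαle1 (t+1) (by omega)
      have key : 2*s*u ≤ s^2 + u^2 := by nlinarith [sq_nonneg (s-u)]
      have hnum : 2*(t:ℝ)*u + ((H:ℝ)+1)*s ≤ 2*((H:ℝ)+t+1)*s := by
        nlinarith [mul_le_mul_of_nonneg_left key hs0.le, hs2, hu2, hHr, hs0.le, hu0.le]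
      have step1 : (1 - α (t+1)) * (∑ i ∈ Finset.Icc 1 t, w t i / Real.sqrt i)
          ≤ (1 - α (t+1)) * (2 / s) := by
        apply mul_le_mul_of_nonneg_left ih (by linarith)
      have final : (1 - α (t+1)) * (2 / s) + α (t+1) / u ≤ 2 / u := by
        rw [hαt]
        have e1 : (1 - ((H:ℝ)+1)/((H:ℝ)+t+1)) * (2/s) + (((H:ℝ)+1)/((H:ℝ)+t+1)) / u
            = (2*(t:ℝ)*u + ((H:ℝ)+1)*s) / (((H:ℝ)+t+1)*s*u) := by
          field_simp
          ring
        rw [e1, div_le_div_iff₀ (by positivity) hu0]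
        nlinarith [mul_le_mul_of_nonneg_right hnum hu0.le]
      calc (1 - α (t+1)) * (∑ i ∈ Finset.Icc 1 t, w t i / Real.sqrt i) + α (t+1) / u
          ≤ (1 - α (t+1)) * (2 / s) + α (t+1) / u := add_le_add step1 le_rfl
        _ ≤ 2 / u := final
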